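/- arXiv:2008.07797 — 2 statements merged into one kernel-verified Lean document; each statement's English description precedes it below -/
import Mathlib

section
/- Let N be a rooted phylogenetic network on a finite set X and let Ñ be its normalisation. Then the set of clusters of Ñ equals the set of clusters of visible vertices of N: {C_Ñ(v) : v a vertex of Ñ} = {C_N(v) : v ∈ V_vis(N)}. -/
/-!
Formalisation framework for rooted phylogenetic networks.

A network is represented as a directed graph on an ambient vertex type `V`:
a vertex set `verts`, a root vertex `root`, and an arc relation `arc`.
-/

structure Net (V : Type*) where
  verts : Set V
  root : V
  arc : V → V → Prop

namespace Net

variable {V : Type*} {W : Type*}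

/-- `N.reach u v` means there is a (possibly empty) directed path from `u` to `v`. -/
def reach (N : Net V) : V → V → Prop := Relation.ReflTransGen N.arc

/-- The in-degree of a vertex. -/
noncomputable def inDeg (N : Net V) (v : V) : ℕ := {u | N.arc u v}.ncard

/-- The out-degree of a vertex. -/
noncomputable def outDeg (N : Net V) (v : V) : ℕ := {w | N.arc v w}.ncard

/-- The leaves of `N`: the vertices of out-degree 0. -/
def leaves (N : Net V) : Set V := {v ∈ N.verts | N.outDeg v = 0}

/-- `N.IsPathFrom u v l` : the list `l` is a directed path in `N` from `u` to `v`
(consecutive entries joined by arcs; a one-element list is the empty path). -/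
def IsPathFrom (N : Net V) (u v : V) (l : List V) : Prop :=
  l.Chain' N.arc ∧ l.head? = some u ∧ l.getLast? = some v

/-- A vertex is visible if some leaf is such that every directed path from the
root to that leaf passes through the vertex. -/
def Visible (N : Net V) (x : V) : Prop :=
  x ∈ N.verts ∧ ∃ y ∈ N.leaves, ∀ l : List V, N.IsPathFrom N.root y l → x ∈ l

/-- A subdividing vertex is one of in-degree 1 and out-degree 1. -/
def Subdividing (N : Net V) (v : V) : Prop := N.inDeg v = 1 ∧ N.outDeg v = 1

/-- The digraph `Cov(N)` on the visible vertices of `N`: an arc `(u,v)` whenever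
`u ≠ v`, `u →_N v`, and no visible vertex lies strictly between `u` and `v`. -/
def cov (N : Net V) : Net V where
  verts := {v | N.Visible v}
  root := N.root
  arc u v := N.Visible u ∧ N.Visible v ∧ u ≠ v ∧ N.reach u v ∧
    ¬ ∃ w, N.Visible w ∧ w ≠ u ∧ w ≠ v ∧ N.reach u w ∧ N.reach w v

/-- The normalisation `Ñ` of `N`: obtained from `Cov(N)` by suppressing every
subdividing vertex.  Its vertices are the visible vertices of `N` that are not
subdividing in `Cov(N)`, with an arc `(u,v)` whenever `Cov(N)` has a directed path
from `u` to `v` (of length at least one) all of whose interior vertices are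
subdividing in `Cov(N)`. -/
def normalise (N : Net V) : Net V where
  verts := {v | N.Visible v ∧ ¬ N.cov.Subdividing v}
  root := N.root
  arc u v := (N.Visible u ∧ ¬ N.cov.Subdividing u) ∧ (N.Visible v ∧ ¬ N.cov.Subdividing v) ∧
    ∃ l : List V, N.cov.IsPathFrom u v l ∧ 2 ≤ l.length ∧
      ∀ w ∈ l.tail.dropLast, N.cov.Subdividing w

/-- `N` is a rooted phylogenetic network on the finite nonempty leaf set `X`. -/
structure IsPhylo (N : Net V) (X : Set V) : Prop where
  finite : N.verts.Finite
  nonempty : X.Nonempty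
  arc_mem : ∀ ⦃u v : V⦄, N.arc u v → u ∈ N.verts ∧ v ∈ N.verts
  acyclic : ∀ ⦃u v : V⦄, N.arc u v → ¬ N.reach v u
  root_mem : N.root ∈ N.verts
  root_inDeg : N.inDeg N.root = 0
  root_unique : ∀ v ∈ N.verts, N.inDeg v = 0 → v = N.root
  leaves_eq : N.leaves = X
  leaf_inDeg : ∀ x ∈ X, N.inDeg x = 1
  interior_deg : ∀ v ∈ N.verts, v ≠ N.root → v ∉ X →
    (N.inDeg v = 1 ∧ 2 ≤ N.outDeg v) ∨ (N.outDeg v = 1 ∧ 2 ≤ N.inDeg v)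

/-- `N` has no shortcuts: no arc `(u,v)` such that there is also a directed path
from `u` to `v` of length at least 2 (i.e. a path-list with at least 3 entries). -/
def NoShortcuts (N : Net V) : Prop :=
  ∀ u v : V, N.arc u v → ¬ ∃ l : List V, N.IsPathFrom u v l ∧ 3 ≤ l.length

/-- Tree-child: every vertex is visible. -/
def TreeChild (N : Net V) : Prop := ∀ v ∈ N.verts, N.Visible v

/-- Normal: tree-child with no shortcuts. -/
def Normal (N : Net V) : Prop := N.TreeChild ∧ N.NoShortcuts

/-- A tree: every vertex has in-degree at most 1. -/
def IsTree (N : Net V) : Prop := ∀ v ∈ N.verts, N.inDeg v ≤ 1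

/-- The cluster of `v`: the set of leaves reachable from `v`. -/
def cluster (N : Net V) (v : V) : Set V := {x ∈ N.leaves | N.reach v x}

/-- The identifying set of `v`: the set of leaves `x` such that every directed
path from the root to `x` passes through `v`. -/
def ident (N : Net V) (v : V) : Set V :=
  {x ∈ N.leaves | ∀ l : List V, N.IsPathFrom N.root x l → v ∈ l}

/-- A digraph isomorphism between two networks, given by the map `f`. -/
def NetEquiv (M : Net V) (M' : Net W) (f : V → W) : Prop :=
  Set.BijOn f M.verts M'.verts ∧
    ∀ u ∈ M.verts, ∀ v ∈ M.verts, (M.arc u v ↔ M'.arc (f u) (f v))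

/-- Two networks over the same ambient type are equivalent relative to a leaf set
`X` if there is a digraph isomorphism between them fixing each element of `X`. -/
def EquivOn (M M' : Net V) (X : Set V) : Prop :=
  ∃ f : V → V, NetEquiv M M' f ∧ ∀ x ∈ X, f x = x

/-- `N₁ ⊕ N₂` : disjoint copies of `N₁` and `N₂` under a new root (`none`). -/
def oplus {V₁ V₂ : Type*} (N₁ : Net V₁) (N₂ : Net V₂) : Net (Option (V₁ ⊕ V₂)) where
  verts := insert none
    ((fun v => some (Sum.inl v)) '' N₁.verts ∪ (fun v => some (Sum.inr v)) '' N₂.verts)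
  root := none
  arc a b :=
    match a, b with
    | none, some (Sum.inl w) => w = N₁.root
    | none, some (Sum.inr w) => w = N₂.root
    | some (Sum.inl u), some (Sum.inl w) => N₁.arc u w
    | some (Sum.inr u), some (Sum.inr w) => N₂.arc u w
    | _, _ => False

/-- `N₁ ⊗ N₂` : identify each leaf `x` of `N₁` with the root of its own copy of `N₂`;
the copy of a non-leaf vertex `u` of `N₁` is `Sum.inl u`, and the vertex `w` of the
copy of `N₂` attached at leaf `x` of `N₁` is `Sum.inr (x, w)`. -/
def otimes {V₁ V₂ : Type*} (N₁ : Net V₁) (N₂ : Net V₂) : Net (V₁ ⊕ V₁ × V₂) where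
  verts := Sum.inl '' (N₁.verts \ N₁.leaves) ∪ Sum.inr '' (N₁.leaves ×ˢ N₂.verts)
  root := Sum.inl N₁.root
  arc a b :=
    match a, b with
    | Sum.inl u, Sum.inl w => N₁.arc u w ∧ w ∉ N₁.leaves
    | Sum.inl u, Sum.inr (x, w) => x ∈ N₁.leaves ∧ N₁.arc u x ∧ w = N₂.root
    | Sum.inr (x, w), Sum.inr (x', w') => x = x' ∧ x ∈ N₁.leaves ∧ N₂.arc w w'
    | _, _ => False

end Net

/-- A hierarchy: a collection of sets any two of which are disjoint or nested. -/
def IsHierarchy {V : Type*} (C : Set (Set V)) : Prop :=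
  ∀ A ∈ C, ∀ B ∈ C, A ∩ B = ∅ ∨ A ⊆ B ∨ B ⊆ A


/-! ### Auxiliary lemmas for Statement 11 -/

namespace Net

variable {V' : Type*}

theorem pn_exists_path_of_reach {N : Net V'} {u v : V'} (h : N.reach u v) :
    ∃ l, N.IsPathFrom u v l := by
  induction h with
  | refl => exact ⟨[u], List.isChain_singleton u, rfl, rfl⟩
  | @tail b c hab hbc ih =>
    obtain ⟨l, hch, hh, hl⟩ := ih
    refine ⟨l ++ [c], ?_, ?_, ?_⟩
    · unfold List.Chain'
      rw [List.isChain_append]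
      exact ⟨hch, List.isChain_singleton _, fun x hx y hy => by
        rw [Option.mem_def] at hx hy
        rw [hl] at hx; cases hx; cases hy; exact hbc⟩
    · rw [List.head?_append, hh]; rfl
    · rw [List.getLast?_append]; rfl

theorem pn_reach_last_of_chain {N : Net V'} :
    ∀ (l : List V'), l.Chain' N.arc → ∀ v, l.getLast? = some v → ∀ w ∈ l, N.reach w v := by
  intro l
  induction l with
  | nil => intro _ v _ w hw; cases hw
  | cons a t ih =>
    intro hch v hlast w hw
    cases t with
    | nil =>
      simp only [List.getLast?_singleton, Option.some.injEq] at hlast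
      rcases List.mem_cons.mp hw with hw | hw
      · subst hlast; subst hw; exact Relation.ReflTransGen.refl
      · cases hw
    | cons b t' =>
      rw [List.getLast?_cons_cons] at hlast
      unfold List.Chain' at hch
      rw [List.isChain_cons_cons] at hch
      rcases List.mem_cons.mp hw with hw | hw
      · subst hw
        exact Relation.ReflTransGen.head hch.1 (ih hch.2 v hlast b List.mem_cons_self)
      · exact ih hch.2 v hlast w hw

theorem pn_reach_of_mem_path {N : Net V'} {u v w : V'} {l : List V'}
    (h : N.IsPathFrom u v l) (hw : w ∈ l) : N.reach w v :=
  pn_reach_last_of_chain l h.1 v h.2.2 w hw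

theorem pn_reach_of_path {N : Net V'} {u v : V'} {l : List V'}
    (h : N.IsPathFrom u v l) : N.reach u v :=
  pn_reach_of_mem_path h (List.mem_of_mem_head? (Option.mem_def.mpr h.2.1))

theorem pn_reach_mono {N : Net V'} {R : V' → V' → Prop}
    (hR : ∀ a b, N.arc a b → Relation.ReflTransGen R a b)
    {u v : V'} (h : N.reach u v) : Relation.ReflTransGen R u v := by
  induction h with
  | refl => exact Relation.ReflTransGen.refl
  | tail _ hbc ih => exact ih.trans (hR _ _ hbc)

theorem pn_transGen_of_path {N : Net V'} {R : V' → V' → Prop}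
    (hR : ∀ a b, N.arc a b → Relation.TransGen R a b) {u v : V'} {l : List V'}
    (h : N.IsPathFrom u v l) (hlen : 2 ≤ l.length) : Relation.TransGen R u v := by
  obtain ⟨hch, hh, hl⟩ := h
  cases l with
  | nil => cases hh
  | cons a t =>
    cases t with
    | nil => simp at hlen
    | cons b t' =>
      cases hh
      unfold List.Chain' at hch
      rw [List.isChain_cons_cons] at hch
      rw [List.getLast?_cons_cons] at hl
      have h1 : Relation.TransGen R u b := hR _ _ hch.1
      have h2 : N.reach b v :=
        pn_reach_last_of_chain _ hch.2 v hl b List.mem_cons_self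
      exact h1.trans_left (pn_reach_mono (fun a b hab => (hR a b hab).to_reflTransGen) h2)

section Phylo

variable {N : Net V'} {X : Set V'} (hN : N.IsPhylo X)
include hN

theorem pn_out_finite (v : V') : {w | N.arc v w}.Finite :=
  hN.finite.subset (fun _ hw => (hN.arc_mem hw).2)

theorem pn_in_finite (v : V') : {u | N.arc u v}.Finite :=
  hN.finite.subset (fun _ hu => (hN.arc_mem hu).1)

theorem pn_wf_up :
    WellFounded (fun a b : {v // v ∈ N.verts} => Relation.TransGen N.arc a.1 b.1) := by
  haveI : Finite {v // v ∈ N.verts} := hN.finite.to_subtype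
  haveI : IsTrans {v // v ∈ N.verts} (fun a b => Relation.TransGen N.arc a.1 b.1) :=
    ⟨fun _ _ _ h1 h2 => h1.trans h2⟩
  haveI : IsIrrefl {v // v ∈ N.verts} (fun a b => Relation.TransGen N.arc a.1 b.1) := by
    refine ⟨fun a h => ?_⟩
    obtain ⟨b, hab, hba⟩ := Relation.TransGen.head'_iff.mp h
    exact hN.acyclic hab hba
  exact Finite.wellFounded_of_trans_of_irrefl _

theorem pn_wf_down :
    WellFounded (fun a b : {v // v ∈ N.verts} => Relation.TransGen N.arc b.1 a.1) := by
  haveI : Finite {v // v ∈ N.verts} := hN.finite.to_subtype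
  haveI : IsTrans {v // v ∈ N.verts} (fun a b => Relation.TransGen N.arc b.1 a.1) :=
    ⟨fun _ _ _ h1 h2 => h2.trans h1⟩
  haveI : IsIrrefl {v // v ∈ N.verts} (fun a b => Relation.TransGen N.arc b.1 a.1) := by
    refine ⟨fun a h => ?_⟩
    obtain ⟨b, hab, hba⟩ := Relation.TransGen.head'_iff.mp h
    exact hN.acyclic hab hba
  exact Finite.wellFounded_of_trans_of_irrefl _

theorem pn_strict_of_reach {u v : V'} (h : N.reach u v) (hne : u ≠ v) :
    Relation.TransGen N.arc u v := by
  rcases Relation.reflTransGen_iff_eq_or_transGen.mp h with h' | h'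
  · exact absurd h'.symm hne
  · exact h'

theorem pn_root_reach : ∀ v ∈ N.verts, N.reach N.root v := by
  suffices h : ∀ a : {v // v ∈ N.verts}, N.reach N.root a.1 by
    intro v hv; exact h ⟨v, hv⟩
  intro a
  refine (pn_wf_up hN).induction (C := fun a => N.reach N.root a.1) a (fun b IH => ?_)
  show N.reach N.root b.1
  by_cases hb : b.1 = N.root
  · rw [hb]; exact Relation.ReflTransGen.refl
  · have h0 : N.inDeg b.1 ≠ 0 := fun h0 => hb (hN.root_unique b.1 b.2 h0)
    obtain ⟨u, hu⟩ := Set.nonempty_of_ncard_ne_zero h0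
    have hu' : u ∈ N.verts := (hN.arc_mem hu).1
    exact (IH ⟨u, hu'⟩ (Relation.TransGen.single hu)).tail hu

theorem pn_leaf_visible {x : V'} (hx : x ∈ N.leaves) : N.Visible x :=
  ⟨hx.1, x, hx, fun _ hl => List.mem_of_mem_getLast? (Option.mem_def.mpr hl.2.2)⟩

theorem pn_reach_leaf_eq {x w : V'} (hx : x ∈ N.leaves) (h : N.reach x w) : w = x := by
  rcases Relation.reflTransGen_iff_eq_or_transGen.mp h with h' | h'
  · exact h'
  · obtain ⟨c, hxc, _⟩ := Relation.TransGen.head'_iff.mp h'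
    have : {w | N.arc x w} = ∅ := (Set.ncard_eq_zero (pn_out_finite hN x)).mp hx.2
    exact absurd (Set.mem_setOf.mpr hxc) (this ▸ Set.notMem_empty c)

theorem pn_visible_reach {v : V'} (h : N.Visible v) : ∃ y ∈ N.leaves, N.reach v y := by
  obtain ⟨hv, y, hy, hall⟩ := h
  obtain ⟨l, hl⟩ := pn_exists_path_of_reach (pn_root_reach hN y hy.1)
  exact ⟨y, hy, pn_reach_of_mem_path hl (hall l hl)⟩

theorem pn_leaf_cov_out {x : V'} (hx : x ∈ N.leaves) : {w | N.cov.arc x w} = ∅ := by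
  ext w
  simp only [Set.mem_setOf_eq, Set.mem_empty_iff_false, iff_false]
  rintro ⟨_, _, hne, hr, _⟩
  exact hne (pn_reach_leaf_eq hN hx hr).symm

theorem pn_leaf_not_sub {x : V'} (hx : x ∈ N.leaves) : ¬ N.cov.Subdividing x := by
  rintro ⟨_, hout⟩
  rw [Net.outDeg, pn_leaf_cov_out hN hx, Set.ncard_empty] at hout
  exact one_ne_zero hout.symm

theorem pn_claimC {v x : V'} (hv : N.Visible v) (hx : x ∈ N.leaves)
    (hr : N.reach v x) (hne : v ≠ x) : ∃ w, N.cov.arc v w ∧ N.reach w x := by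
  set T : Set {v // v ∈ N.verts} :=
    {w | N.Visible w.1 ∧ w.1 ≠ v ∧ N.reach v w.1 ∧ N.reach w.1 x} with hT
  have hxT : (⟨x, hx.1⟩ : {v // v ∈ N.verts}) ∈ T :=
    ⟨pn_leaf_visible hN hx, Ne.symm hne, hr, Relation.ReflTransGen.refl⟩
  obtain ⟨m, hm, hmin⟩ := (pn_wf_up hN).has_min T ⟨_, hxT⟩
  refine ⟨m.1, ⟨hv, hm.1, Ne.symm hm.2.1, hm.2.2.1, ?_⟩, hm.2.2.2⟩
  rintro ⟨w, hwvis, hwnev, hwnem, hvw, hwm⟩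
  have hwx : N.reach w x := hwm.trans hm.2.2.2
  have hwT : (⟨w, hwvis.1⟩ : {v // v ∈ N.verts}) ∈ T := ⟨hwvis, hwnev, hvw, hwx⟩
  exact hmin _ hwT (pn_strict_of_reach hN hwm hwnem)

theorem pn_cov_reach {v x : V'} (hv : N.Visible v) (hx : x ∈ N.leaves)
    (hr : N.reach v x) : N.cov.reach v x := by
  suffices h : ∀ a : {v // v ∈ N.verts}, N.Visible a.1 → N.reach a.1 x → N.cov.reach a.1 x by
    exact h ⟨v, hv.1⟩ hv hr
  intro a
  refine (pn_wf_down hN).induction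
    (C := fun a => N.Visible a.1 → N.reach a.1 x → N.cov.reach a.1 x) a (fun b IH hbvis hbr => ?_)
  by_cases hbx : b.1 = x
  · rw [hbx]; exact Relation.ReflTransGen.refl
  · obtain ⟨w, hcov, hwx⟩ := pn_claimC hN hbvis hx hbr hbx
    have hwvis : N.Visible w := hcov.2.1
    exact Relation.ReflTransGen.head hcov
      (IH ⟨w, hwvis.1⟩ (pn_strict_of_reach hN hcov.2.2.2.1 hcov.2.2.1) hwvis hwx)

theorem pn_claimB {x : V'} (hx : x ∈ N.leaves) :
    ∀ u : V', N.Visible u → N.cov.reach u x → u ≠ x →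
    ∃ w, N.Visible w ∧ ¬ N.cov.Subdividing w ∧ N.cov.reach w x ∧
      ∃ l, N.cov.IsPathFrom u w l ∧ 2 ≤ l.length ∧
        ∀ z ∈ l.tail.dropLast, N.cov.Subdividing z := by
  suffices h : ∀ a : {v // v ∈ N.verts}, N.cov.reach a.1 x → a.1 ≠ x →
      ∃ w, N.Visible w ∧ ¬ N.cov.Subdividing w ∧ N.cov.reach w x ∧
      ∃ l, N.cov.IsPathFrom a.1 w l ∧ 2 ≤ l.length ∧
        ∀ z ∈ l.tail.dropLast, N.cov.Subdividing z by
    intro u hu hr hne; exact h ⟨u, hu.1⟩ hr hne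
  intro a
  refine (pn_wf_down hN).induction
    (C := fun a => N.cov.reach a.1 x → a.1 ≠ x →
      ∃ w, N.Visible w ∧ ¬ N.cov.Subdividing w ∧ N.cov.reach w x ∧
      ∃ l, N.cov.IsPathFrom a.1 w l ∧ 2 ≤ l.length ∧
        ∀ z ∈ l.tail.dropLast, N.cov.Subdividing z) a (fun b IH hbr hbx => ?_)
  rcases hbr.cases_head with h' | ⟨u', hbu', hu'x⟩
  · exact absurd h' hbx
  have hu'vis : N.Visible u' := hbu'.2.1
  by_cases hs : N.cov.Subdividing u'
  · have hu'ne : u' ≠ x := fun h => hs.elim (fun _ _ => pn_leaf_not_sub hN hx (h ▸ hs))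
    obtain ⟨w, hwvis, hwns, hwx, l', ⟨hch, hh, hl⟩, hlen, hint⟩ :=
      IH ⟨u', hu'vis.1⟩ (pn_strict_of_reach hN hbu'.2.2.2.1 hbu'.2.2.1) hu'x hu'ne
    cases l' with
    | nil => cases hh
    | cons c t =>
      have hc : u' = c := by cases hh; rfl
      subst hc
      refine ⟨w, hwvis, hwns, hwx, b.1 :: u' :: t, ⟨?_, rfl, ?_⟩, by simp, ?_⟩
      · exact List.isChain_cons_cons.mpr ⟨hbu', hch⟩
      · rw [List.getLast?_cons_cons]; exact hl
      · intro z hz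
        simp only [List.tail_cons] at hz ⊢
        cases t with
        | nil => simp at hz
        | cons d t' =>
          rw [List.dropLast_cons₂] at hz
          rcases List.mem_cons.mp hz with hz | hz
          · subst hz; exact hs
          · exact hint z (by simpa using hz)
  · refine ⟨u', hu'vis, hs, hu'x, [b.1, u'], ⟨?_, rfl, rfl⟩, by simp, by simp⟩
    exact List.isChain_cons_cons.mpr ⟨hbu', List.isChain_singleton _⟩

theorem pn_cov_arc_transGen {a b : V'} (h : N.cov.arc a b) : Relation.TransGen N.arc a b :=
  pn_strict_of_reach hN h.2.2.2.1 h.2.2.1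

theorem pn_normalise_reach {v x : V'} (hv : N.Visible v) (hns : ¬ N.cov.Subdividing v)
    (hx : x ∈ N.leaves) (h : N.cov.reach v x) : N.normalise.reach v x := by
  suffices hs : ∀ a : {v // v ∈ N.verts}, N.Visible a.1 → ¬ N.cov.Subdividing a.1 →
      N.cov.reach a.1 x → N.normalise.reach a.1 x by
    exact hs ⟨v, hv.1⟩ hv hns h
  intro a
  refine (pn_wf_down hN).induction
    (C := fun a => N.Visible a.1 → ¬ N.cov.Subdividing a.1 →
      N.cov.reach a.1 x → N.normalise.reach a.1 x) a (fun b IH hbvis hbns hbr => ?_)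
  by_cases hbx : b.1 = x
  · rw [hbx]; exact Relation.ReflTransGen.refl
  · obtain ⟨w, hwvis, hwns, hwx, l, hl, hlen, hint⟩ := pn_claimB hN hx b.1 hbvis hbr hbx
    have harc : N.normalise.arc b.1 w :=
      ⟨⟨hbvis, hbns⟩, ⟨hwvis, hwns⟩, l, hl, hlen, hint⟩
    have htg : Relation.TransGen N.arc b.1 w :=
      pn_transGen_of_path (fun a b h => pn_cov_arc_transGen hN h) hl hlen
    exact Relation.ReflTransGen.head harc (IH ⟨w, hwvis.1⟩ htg hwvis hwns hwx)

theorem pn_cov_reach_reach {u v : V'} (h : N.cov.reach u v) : N.reach u v :=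
  pn_reach_mono (N := N.cov) (fun _ _ hab => hab.2.2.2.1) h

theorem pn_normalise_arc_reach {u v : V'} (h : N.normalise.arc u v) : N.reach u v := by
  obtain ⟨_, _, l, hl, hlen, _⟩ := h
  exact pn_cov_reach_reach hN (pn_reach_of_path hl)

theorem pn_normalise_reach_reach {u v : V'} (h : N.normalise.reach u v) : N.reach u v :=
  pn_reach_mono (fun _ _ hab => pn_normalise_arc_reach hN hab) h

theorem pn_leaves_normalise : N.normalise.leaves = N.leaves := by
  ext v
  constructor
  · rintro ⟨hv, hout⟩
    obtain ⟨hvis, hns⟩ : N.Visible v ∧ ¬ N.cov.Subdividing v := hv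
    obtain ⟨y, hy, hvy⟩ := pn_visible_reach hN hvis
    by_cases hvy' : v = y
    · rw [hvy']; exact hy
    · exfalso
      obtain ⟨w, _, hwns', _, l, hl, hlen, hint⟩ :=
        pn_claimB hN hy v hvis (pn_cov_reach hN hvis hy hvy) hvy'
      have harc : N.normalise.arc v w :=
        ⟨⟨hvis, hns⟩, ⟨‹N.Visible w›, hwns'⟩, l, hl, hlen, hint⟩
      have hfin : {w | N.normalise.arc v w}.Finite :=
        hN.finite.subset (fun z hz => hz.2.1.1.1)
      have : {w | N.normalise.arc v w}.ncard ≠ 0 := by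
        rw [Ne, Set.ncard_eq_zero hfin]
        exact fun he => (he ▸ Set.mem_setOf.mpr harc : (w : V') ∈ (∅ : Set V'))
      exact this hout
  · intro hx
    refine ⟨⟨pn_leaf_visible hN hx, pn_leaf_not_sub hN hx⟩, ?_⟩
    have hemp : {w | N.normalise.arc v w} = ∅ := by
      ext w
      simp only [Set.mem_setOf_eq, Set.mem_empty_iff_false, iff_false]
      rintro ⟨_, _, l, ⟨hch, hh, _⟩, hlen, _⟩
      cases l with
      | nil => cases hh
      | cons a t =>
        have ha : a = v := by cases hh; rfl
        subst ha
        cases t with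
        | nil => simp at hlen
        | cons b t' =>
          have := (List.isChain_cons_cons.mp hch).1
          exact (pn_leaf_cov_out hN hx ▸ Set.mem_setOf.mpr this : (b : V') ∈ (∅ : Set V'))
    rw [Net.outDeg, hemp, Set.ncard_empty]

theorem pn_cluster_norm_eq {v : V'} (hv : v ∈ N.normalise.verts) :
    N.normalise.cluster v = N.cluster v := by
  obtain ⟨hvis, hns⟩ : N.Visible v ∧ ¬ N.cov.Subdividing v := hv
  ext x
  constructor
  · rintro ⟨hxl, hr⟩
    exact ⟨(pn_leaves_normalise hN) ▸ hxl, pn_normalise_reach_reach hN hr⟩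
  · rintro ⟨hxl, hr⟩
    refine ⟨(pn_leaves_normalise hN).symm ▸ hxl, ?_⟩
    by_cases hvx : v = x
    · rw [hvx]; exact Relation.ReflTransGen.refl
    · exact pn_normalise_reach hN hvis hns hxl (pn_cov_reach hN hvis hxl hr)

theorem pn_exists_good {v : V'} (hv : N.Visible v) :
    ∃ u, (N.Visible u ∧ ¬ N.cov.Subdividing u) ∧ N.cluster u = N.cluster v := by
  suffices hs : ∀ a : {v // v ∈ N.verts}, N.Visible a.1 →
      ∃ u, (N.Visible u ∧ ¬ N.cov.Subdividing u) ∧ N.cluster u = N.cluster a.1 by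
    exact hs ⟨v, hv.1⟩ hv
  intro a
  refine (pn_wf_down hN).induction
    (C := fun a => N.Visible a.1 →
      ∃ u, (N.Visible u ∧ ¬ N.cov.Subdividing u) ∧ N.cluster u = N.cluster a.1)
    a (fun b IH hbvis => ?_)
  by_cases hs : N.cov.Subdividing b.1
  · obtain ⟨w, hw⟩ := Set.ncard_eq_one.mp hs.2
    have hbw : N.cov.arc b.1 w := by
      have : w ∈ {z | N.cov.arc b.1 z} := hw ▸ rfl
      exact this
    have hbleaf : b.1 ∉ N.leaves := by
      intro hb
      rw [pn_leaf_cov_out hN hb] at hw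
      exact (Set.singleton_ne_empty w) hw.symm
    have hcl : N.cluster b.1 = N.cluster w := by
      ext x
      constructor
      · rintro ⟨hxl, hr⟩
        refine ⟨hxl, ?_⟩
        by_cases hbx : b.1 = x
        · exact absurd (hbx ▸ hxl) hbleaf
        · obtain ⟨w', hw', hw'x⟩ := pn_claimC hN hbvis hxl hr hbx
          have : w' ∈ {z | N.cov.arc b.1 z} := hw'
          rw [hw] at this
          cases this
          exact hw'x
      · rintro ⟨hxl, hr⟩
        exact ⟨hxl, (hbw.2.2.2.1).trans hr⟩
    have hwvis : N.Visible w := hbw.2.1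
    obtain ⟨u, hu, hucl⟩ := IH ⟨w, hwvis.1⟩ (pn_cov_arc_transGen hN hbw) hwvis
    exact ⟨u, hu, hucl.trans hcl.symm⟩
  · exact ⟨b.1, ⟨hbvis, hs⟩, rfl⟩

end Phylo

end Net

/-- The set of clusters of the normalisation `Ñ` equals the set of
clusters (in `N`) of the visible vertices of `N`. -/
theorem stmt11 {V : Type*} (N : Net V) (X : Set V) (hN : N.IsPhylo X) :
    N.normalise.cluster '' N.normalise.verts = N.cluster '' {v | N.Visible v} := by
  apply Set.Subset.antisymm
  · rintro _ ⟨v, hv, rfl⟩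
    have hv' : N.Visible v ∧ ¬ N.cov.Subdividing v := hv
    exact ⟨v, hv'.1, (Net.pn_cluster_norm_eq hN hv).symm⟩
  · rintro _ ⟨v, hv, rfl⟩
    obtain ⟨u, hu, hcl⟩ := Net.pn_exists_good hN hv
    refine ⟨u, hu, ?_⟩
    rw [Net.pn_cluster_norm_eq hN hu, hcl]
end

section
/- Let M be a normal network on a finite set X. Then M is a tree (every vertex has in-degree at most 1) if and only if the collection of clusters {C_M(v) : v a vertex of M} forms a hierarchy on X. -/
namespace Net

variable {V : Type*} {M : Net V} {X : Set V} {u v w : V} {l : List V}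

lemma mem_reach_of_path (h : M.IsPathFrom u v l) :
    ∀ p ∈ l, M.reach u p ∧ M.reach p v := by
  obtain ⟨hc, hh, hl⟩ := h
  induction l generalizing u with
  | nil => simp at hh
  | cons a t ih =>
    simp only [List.head?_cons, Option.some.injEq] at hh
    subst hh
    rcases t with _ | ⟨b, t⟩
    · simp only [List.getLast?_singleton, Option.some.injEq] at hl
      subst hl
      intro p hp; simp only [List.mem_singleton] at hp; subst hp
      exact ⟨.refl, .refl⟩
    · have harc := (List.isChain_cons_cons.mp hc).1
      have hc' := (List.isChain_cons_cons.mp hc).2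
      have hl' : (b :: t).getLast? = some v := by simpa using hl
      have ih' := ih hc' rfl hl'
      intro p hp
      rcases List.mem_cons.mp hp with rfl | hp
      · exact ⟨.refl, Relation.ReflTransGen.head harc (ih' b List.mem_cons_self).2⟩
      · obtain ⟨h1, h2⟩ := ih' p hp
        exact ⟨Relation.ReflTransGen.head harc h1, h2⟩

lemma reach_of_path (h : M.IsPathFrom u v l) : M.reach u v := by
  rcases l with _ | ⟨a, t⟩
  · simp [IsPathFrom] at h
  · have : a = u := by simpa using h.2.1
    subst this
    exact (mem_reach_of_path h _ List.mem_cons_self).2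

lemma path_snoc (h : M.IsPathFrom u v l) (harc : M.arc v w) :
    M.IsPathFrom u w (l ++ [w]) := by
  obtain ⟨hc, hh, hl⟩ := h
  refine ⟨List.isChain_append.mpr ⟨hc, List.isChain_singleton _, ?_⟩, ?_, by simp⟩
  · intro x hx y hy
    rw [Option.mem_def, hl, Option.some.injEq] at hx
    rw [Option.mem_def, List.head?_cons, Option.some.injEq] at hy
    subst hx; subst hy; exact harc
  · rcases l with _ | ⟨a, t⟩
    · simp at hh
    · simpa using hh

lemma path_of_reach (h : M.reach u v) : ∃ l, M.IsPathFrom u v l := by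
  induction h with
  | refl => exact ⟨[u], ⟨List.isChain_singleton _, by simp, by simp⟩⟩
  | tail _ harc ih => obtain ⟨l, hl⟩ := ih; exact ⟨l ++ [_], path_snoc hl harc⟩

lemma two_le_length_of_path (h : M.IsPathFrom u v l) (hne : u ≠ v) : 2 ≤ l.length := by
  rcases l with _ | ⟨a, t⟩
  · simp [IsPathFrom] at h
  · rcases t with _ | ⟨b, t⟩
    · exact absurd (by
        have h1 : a = u := by simpa using h.2.1
        have h2 : a = v := by simpa using h.2.2
        rw [← h1, ← h2]) hne
    · simp

lemma path_trans {l₁ l₂ : List V} (h₁ : M.IsPathFrom u v l₁) (h₂ : M.IsPathFrom v w l₂) :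
    M.IsPathFrom u w (l₁ ++ l₂.tail) := by
  obtain ⟨hc₁, hh₁, hl₁⟩ := h₁
  obtain ⟨hc₂, hh₂, hl₂⟩ := h₂
  rcases l₂ with _ | ⟨a, t⟩
  · simp at hh₂
  obtain rfl : v = a := by symm; simpa using hh₂
  refine ⟨List.isChain_append.mpr ⟨hc₁, (List.isChain_cons.mp hc₂).2, ?_⟩, ?_, ?_⟩
  · intro x hx y hy
    rw [Option.mem_def, hl₁, Option.some.injEq] at hx
    subst hx
    exact (List.isChain_cons.mp hc₂).1 y hy
  · rcases l₁ with _ | ⟨b, s⟩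
    · simp at hh₁
    · simpa using hh₁
  · rcases t with _ | ⟨b, t⟩
    · have : v = w := by simpa using hl₂
      subst this
      simpa using hl₁
    · have h2 : (b :: t).getLast? = some w := by simpa using hl₂
      simp [List.getLast?_append, h2]

lemma parents_finite (hM : M.IsPhylo X) (v : V) : {u | M.arc u v}.Finite :=
  hM.finite.subset (fun _ hu => (hM.arc_mem hu).1)

lemma children_finite (hM : M.IsPhylo X) (v : V) : {w | M.arc v w}.Finite :=
  hM.finite.subset (fun _ hu => (hM.arc_mem hu).2)

lemma no_trans_loop (hM : M.IsPhylo X) (a : V) : ¬ Relation.TransGen M.arc a a := by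
  intro h
  cases h with
  | single h' => exact hM.acyclic h' .refl
  | tail h' hba => exact hM.acyclic hba h'.to_reflTransGen

lemma root_reach (hM : M.IsPhylo X) : ∀ v ∈ M.verts, M.reach M.root v := by
  haveI hfin : Finite ↥M.verts := hM.finite
  let r : ↥M.verts → ↥M.verts → Prop := fun a b => Relation.TransGen M.arc a.1 b.1
  haveI : IsTrans ↥M.verts r := ⟨fun _ _ _ hab hbc => hab.trans hbc⟩
  haveI : IsIrrefl ↥M.verts r := ⟨fun a => no_trans_loop hM a.1⟩
  have hwf : WellFounded r := Finite.wellFounded_of_trans_of_irrefl r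
  intro v hv
  refine hwf.induction (C := fun z => M.reach M.root z.1) ⟨v, hv⟩ ?_
  rintro ⟨x, hx⟩ ih
  by_cases hroot : x = M.root
  · subst hroot; exact .refl
  · have hne : {u | M.arc u x}.Nonempty := by
      by_contra hcon
      rw [Set.not_nonempty_iff_eq_empty] at hcon
      have : M.inDeg x = 0 := by rw [inDeg, hcon, Set.ncard_empty]
      exact hroot (hM.root_unique x hx this)
    obtain ⟨p, hp⟩ := hne
    exact (ih ⟨p, (hM.arc_mem hp).1⟩ (Relation.TransGen.single hp)).tail hp

lemma leaf_below (hM : M.IsPhylo X) : ∀ v ∈ M.verts, ∃ x ∈ M.leaves, M.reach v x := by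
  haveI hfin : Finite ↥M.verts := hM.finite
  let r : ↥M.verts → ↥M.verts → Prop := fun a b => Relation.TransGen M.arc b.1 a.1
  haveI : IsTrans ↥M.verts r := ⟨fun _ _ _ hab hbc => hbc.trans hab⟩
  haveI : IsIrrefl ↥M.verts r := ⟨fun a => no_trans_loop hM a.1⟩
  have hwf : WellFounded r := Finite.wellFounded_of_trans_of_irrefl r
  intro v hv
  refine hwf.induction (C := fun z => ∃ x ∈ M.leaves, M.reach z.1 x) ⟨v, hv⟩ ?_
  rintro ⟨x, hx⟩ ih
  by_cases hleaf : M.outDeg x = 0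
  · exact ⟨x, ⟨hx, hleaf⟩, .refl⟩
  · have hne : {w | M.arc x w}.Nonempty := by
      by_contra hcon
      rw [Set.not_nonempty_iff_eq_empty] at hcon
      exact hleaf (by rw [outDeg, hcon, Set.ncard_empty])
    obtain ⟨c, hc⟩ := hne
    obtain ⟨y, hy, hcy⟩ := ih ⟨c, (hM.arc_mem hc).2⟩ (Relation.TransGen.single hc)
    exact ⟨y, hy, Relation.ReflTransGen.head hc hcy⟩

/-- Key lemma for the backward direction: a reticulation whose one parent's cluster
is contained in the other's yields a shortcut. -/
lemma shortcut_of_parents (hM : M.IsPhylo X) (hnormal : M.Normal)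
    {p q : V} (hpv : M.arc p v) (hqv : M.arc q v) (hpq : p ≠ q)
    (hsub : M.cluster p ⊆ M.cluster q) : False := by
  have hpverts := (hM.arc_mem hpv).1
  have hqverts := (hM.arc_mem hqv).1
  obtain ⟨-, x, hxleaf, hxvis⟩ := hnormal.1 p hpverts
  -- x is in the cluster of p
  have hxverts : x ∈ M.verts := hxleaf.1
  obtain ⟨l₀, hl₀⟩ := path_of_reach (root_reach hM x hxverts)
  have hpx : M.reach p x := (mem_reach_of_path hl₀ p (hxvis l₀ hl₀)).2
  have hxq : x ∈ M.cluster q := hsub ⟨hxleaf, hpx⟩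
  -- a root-to-x path through q
  obtain ⟨l₁, hl₁⟩ := path_of_reach (root_reach hM q hqverts)
  obtain ⟨l₂, hl₂⟩ := path_of_reach hxq.2
  have hpath := path_trans hl₁ hl₂
  have hpmem := hxvis _ hpath
  rcases List.mem_append.mp hpmem with hp1 | hp2
  · -- p lies on the root-to-q part: M.reach p q, giving a shortcut over arc (p,v)
    have hpq' : M.reach p q := (mem_reach_of_path hl₁ p hp1).2
    obtain ⟨l, hl⟩ := path_of_reach hpq'
    have hlen := two_le_length_of_path hl hpq
    have hlv := path_snoc hl hqv
    exact hnormal.2 p v hpv ⟨l ++ [v], hlv, by simp; omega⟩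
  · -- p lies on the q-to-x part: M.reach q p, giving a shortcut over arc (q,v)
    have hqp : M.reach q p :=
      (mem_reach_of_path hl₂ p (List.mem_of_mem_tail hp2)).1
    obtain ⟨l, hl⟩ := path_of_reach hqp
    have hlen := two_le_length_of_path hl (Ne.symm hpq)
    have hlv := path_snoc hl hpv
    exact hnormal.2 q v hqv ⟨l ++ [v], hlv, by simp; omega⟩

lemma tree_comparable (hM : M.IsPhylo X) (ht : M.IsTree) {x u v : V}
    (hu : M.reach u x) (hv : M.reach v x) : M.reach u v ∨ M.reach v u := by
  induction hu generalizing v with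
  | refl => exact Or.inr hv
  | @tail b c h harc ih =>
    rcases hv.cases_tail with rfl | ⟨y, hvy, hyc⟩
    · exact Or.inl (h.tail harc)
    · have hcv : c ∈ M.verts := (hM.arc_mem harc).2
      have : y = b :=
        (Set.ncard_le_one_iff (parents_finite hM c)).mp (ht c hcv) hyc harc
      subst this
      exact ih hvy

end Net

/-- A normal network `M` on `X` is a tree (every vertex has in-degree
at most 1) if and only if its collection of clusters forms a hierarchy on `X`. -/
theorem stmt13 {V : Type*} (M : Net V) (X : Set V) (hM : M.IsPhylo X)
    (hnormal : M.Normal) :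
    M.IsTree ↔ IsHierarchy (M.cluster '' M.verts) := by
  constructor
  · -- tree implies hierarchy
    intro ht A hA B hB
    obtain ⟨u, hu, rfl⟩ := hA
    obtain ⟨w, hw, rfl⟩ := hB
    rcases Set.eq_empty_or_nonempty (M.cluster u ∩ M.cluster w) with he | ⟨x, hxu, hxw⟩
    · exact Or.inl he
    · rcases Net.tree_comparable hM ht hxu.2 hxw.2 with h | h
      · exact Or.inr (Or.inr (fun y hy => ⟨hy.1, h.trans hy.2⟩))
      · exact Or.inr (Or.inl (fun y hy => ⟨hy.1, h.trans hy.2⟩))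
  · -- hierarchy implies tree
    intro hH v hv
    by_contra hdeg
    have h2 : 1 < M.inDeg v := by omega
    rw [Net.inDeg, Set.one_lt_ncard (Net.parents_finite hM v)] at h2
    obtain ⟨p, hp, q, hq, hpq⟩ := h2
    -- the clusters of p and q intersect
    obtain ⟨x, hxleaf, hvx⟩ := Net.leaf_below hM v hv
    have hxp : x ∈ M.cluster p := ⟨hxleaf, (Relation.ReflTransGen.single hp).trans hvx⟩
    have hxq : x ∈ M.cluster q := ⟨hxleaf, (Relation.ReflTransGen.single hq).trans hvx⟩
    have hpverts := (hM.arc_mem hp).1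
    have hqverts := (hM.arc_mem hq).1
    rcases hH (M.cluster p) ⟨p, hpverts, rfl⟩ (M.cluster q) ⟨q, hqverts, rfl⟩ with
      he | hsub | hsub
    · exact absurd he (by rw [← Set.not_nonempty_iff_eq_empty]; push_neg; exact ⟨x, hxp, hxq⟩)
    · exact Net.shortcut_of_parents hM hnormal hp hq hpq hsub
    · exact Net.shortcut_of_parents hM hnormal hq hp (Ne.symm hpq) hsub
end
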